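/- arXiv:1506.01362 — 2 statements merged into one kernel-verified Lean document; each statement's English description precedes it below -/
import Mathlib

section
/- Let $G_1 = \bigsqcup_{i=1}^r G_{1i}$ and $G_2 = \bigsqcup_{i=1}^s G_{2i}$ be disjoint unions of connected graphs on disjoint vertex sets $[n_1] = \bigcup [n_{1i}]$ and $[n_2] = \bigcup [n_{2i}]$ with $r, s \geq 2$. Then a nonempty subset $T$ of the vertex set of $G_1 * G_2$ has the cut point property if and only if either $T = [n_2] \cup \bigcup_{i=1}^r T_{1i}$ with each $T_{1i} \in \mathcal{C}(G_{1i})$, or $T = [n_1] \cup \bigcup_{i=1}^s T_{2i}$ with each $T_{2i} \in \mathcal{C}(G_{2i})$. -/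
open SimpleGraph Set

/-- Number of connected components of the induced subgraph of `G` on `s`. -/
noncomputable def nc {V : Type*} (G : SimpleGraph V) (s : Set V) : ℕ :=
  Nat.card (G.induce s).ConnectedComponent

/-- `T` has the cut point property for `G`: every `i ∈ T` is a cut point of the
induced subgraph on `Tᶜ ∪ {i}` (removing `i` increases the number of components). -/
def CutPointProperty {V : Type*} (G : SimpleGraph V) (T : Set V) : Prop :=
  ∀ i ∈ T, nc G (Tᶜ ∪ {i}) < nc G Tᶜ

/-- The join `G₁ * G₂` of two graphs on disjoint vertex sets. -/
def joinGraph {V₁ V₂ : Type*} (G₁ : SimpleGraph V₁) (G₂ : SimpleGraph V₂) :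
    SimpleGraph (V₁ ⊕ V₂) where
  Adj v w :=
    match v, w with
    | Sum.inl a, Sum.inl b => G₁.Adj a b
    | Sum.inr a, Sum.inr b => G₂.Adj a b
    | Sum.inl _, Sum.inr _ => True
    | Sum.inr _, Sum.inl _ => True
  symm := by constructor; rintro (a | a) (b | b) h <;> simp_all <;> exact h.symm
  loopless := by constructor; rintro (a | a) h <;> simp_all

/-- Disjoint union of an indexed family of graphs. -/
def sigmaGraph {ι : Type*} {V : ι → Type*} (G : ∀ i, SimpleGraph (V i)) :
    SimpleGraph (Σ i, V i) where
  Adj v w := ∃ h : v.1 = w.1, (G w.1).Adj (h ▸ v.2) w.2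
  symm := by
    constructor
    rintro ⟨i, a⟩ ⟨j, b⟩ ⟨h, hab⟩
    dsimp at h hab ⊢
    subst h
    exact ⟨rfl, hab.symm⟩
  loopless := by
    constructor
    rintro ⟨i, a⟩ ⟨h, hab⟩
    dsimp at h hab
    exact (G i).irrefl hab
/-- The corona `H ⊙ H'`: one copy of `H'` for each vertex `v` of `H`,
with every vertex of the copy joined to `v`. -/
def coronaGraph {V₁ V₂ : Type*} (H : SimpleGraph V₁) (H' : SimpleGraph V₂) :
    SimpleGraph (V₁ ⊕ V₁ × V₂) where
  Adj v w :=
    match v, w with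
    | Sum.inl a, Sum.inl b => H.Adj a b
    | Sum.inl a, Sum.inr p => a = p.1
    | Sum.inr p, Sum.inl b => p.1 = b
    | Sum.inr p, Sum.inr q => p.1 = q.1 ∧ H'.Adj p.2 q.2
  symm := by
    constructor
    rintro (a | p) (b | q) h <;> dsimp at h ⊢
    · exact h.symm
    · exact h.symm
    · exact h.symm
    · exact ⟨h.1.symm, h.2.symm⟩
  loopless := by constructor; rintro (a | p) h <;> simp_all

/-- The whisker graph `W(H)`: a pendant vertex attached to each vertex of `H`. -/
def whiskerGraph {V : Type*} (H : SimpleGraph V) : SimpleGraph (V ⊕ V) where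
  Adj v w :=
    match v, w with
    | Sum.inl a, Sum.inl b => H.Adj a b
    | Sum.inl a, Sum.inr b => a = b
    | Sum.inr a, Sum.inl b => a = b
    | Sum.inr _, Sum.inr _ => False
  symm := by constructor; rintro (a | a) (b | b) h <;> simp_all; exact h.symm
  loopless := by constructor; rintro (a | a) h <;> simp_all

/-- `F` is (the vertex set of) a maximal clique of `G`. -/
def MaxClique {V : Type*} (G : SimpleGraph V) (F : Set V) : Prop :=
  Maximal G.IsClique F

/-- A graph is chordal if every cycle of length at least 4 has a chord. -/
def IsChordal {V : Type*} (G : SimpleGraph V) : Prop :=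
  ∀ (n : ℕ), 4 ≤ n → ∀ c : ℕ → V, Set.InjOn c (Set.Iio n) →
    (∀ i < n, G.Adj (c i) (c ((i + 1) % n))) →
    ∃ i < n, ∃ j < n, j ≠ i ∧ j ≠ (i + 1) % n ∧ i ≠ (j + 1) % n ∧ G.Adj (c i) (c j)

/-- A generalized block graph: a connected chordal graph in which any three distinct
maximal cliques with nonempty common intersection have all pairwise intersections equal. -/
def GenBlockGraph {V : Type*} (G : SimpleGraph V) : Prop :=
  G.Connected ∧ IsChordal G ∧
    ∀ F₁ F₂ F₃ : Set V, MaxClique G F₁ → MaxClique G F₂ → MaxClique G F₃ →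
      F₁ ≠ F₂ → F₁ ≠ F₃ → F₂ ≠ F₃ → (F₁ ∩ F₂ ∩ F₃).Nonempty →
      F₁ ∩ F₂ = F₁ ∩ F₃ ∧ F₁ ∩ F₂ = F₂ ∩ F₃

/-- `A` is a cut set of `G`: deleting `A` increases the number of connected components. -/
def IsCutSet {V : Type*} (G : SimpleGraph V) (A : Set V) : Prop :=
  nc G Set.univ < nc G Aᶜ

/-- `A` is an inclusion-minimal cut set of `G`. -/
def IsMinCutSet {V : Type*} (G : SimpleGraph V) (A : Set V) : Prop :=
  IsCutSet G A ∧ ∀ B ⊂ A, ¬ IsCutSet G B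

/-- `A` is a `t`-minimal cut set of `G`: a minimal cut set which is the common
intersection of exactly `t` maximal cliques of `G` and disjoint from all other
maximal cliques. -/
def IsTMinCut {V : Type*} (G : SimpleGraph V) (t : ℕ) (A : Set V) : Prop :=
  IsMinCutSet G A ∧
  {F : Set V | MaxClique G F ∧ A ⊆ F}.ncard = t ∧
  ⋂₀ {F : Set V | MaxClique G F ∧ A ⊆ F} = A ∧
  ∀ F : Set V, MaxClique G F → ¬ A ⊆ F → F ∩ A = ∅

/-- `B` is a branch of the facet `F` in the clique complex of `G`. -/
def IsBranch {V : Type*} (G : SimpleGraph V) (F B : Set V) : Prop :=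
  MaxClique G B ∧ B ≠ F ∧ ∀ H : Set V, MaxClique G H → H ≠ F → H ∩ F ⊆ B ∩ F

/-- `F` is a leaf of the clique complex of `G`. -/
def IsLeafClique {V : Type*} (G : SimpleGraph V) (F : Set V) : Prop :=
  MaxClique G F ∧ ((∀ F' : Set V, MaxClique G F' → F' = F) ∨ ∃ B, IsBranch G F B)


-- basic nc lemmas
instance ccFinite {V : Type*} [Finite V] (G : SimpleGraph V) : Finite G.ConnectedComponent :=
  Finite.of_surjective G.connectedComponentMk (ConnectedComponent.ind (fun v => ⟨v, rfl⟩))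

lemma nc_empty_of_isEmpty {V : Type*} (G : SimpleGraph V) (s : Set V) (h : ¬ s.Nonempty) :
    nc G s = 0 := by
  rw [Set.not_nonempty_iff_eq_empty] at h
  subst h
  have : IsEmpty (G.induce (∅ : Set V)).ConnectedComponent :=
    ⟨ConnectedComponent.ind (fun v => isEmptyElim v)⟩
  exact Nat.card_of_isEmpty

lemma nc_pos {V : Type*} [Finite V] (G : SimpleGraph V) (s : Set V) (h : s.Nonempty) :
    1 ≤ nc G s := by
  obtain ⟨v, hv⟩ := h
  have : Nonempty (G.induce s).ConnectedComponent := ⟨(G.induce s).connectedComponentMk ⟨v, hv⟩⟩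
  exact Nat.one_le_iff_ne_zero.mpr (Nat.card_ne_zero.mpr ⟨this, inferInstance⟩)

lemma nc_induce_iso {V V' : Type*} {G : SimpleGraph V} {G' : SimpleGraph V'}
    {s : Set V} {s' : Set V'} (e : G.induce s ≃g G'.induce s') : nc G s = nc G' s' :=
  Nat.card_congr e.connectedComponentEquiv

lemma nc_iso {V V' : Type*} {G : SimpleGraph V} {G' : SimpleGraph V'}
    (e : G ≃g G') (s : Set V) : nc G s = nc G' (⇑e '' s) := by
  refine nc_induce_iso ⟨(Equiv.Set.image ⇑e s e.toEquiv.injective), ?_⟩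
  rintro ⟨a, ha⟩ ⟨b, hb⟩
  simp only [Equiv.Set.image, Equiv.Set.imageOfInjOn, Equiv.coe_fn_mk, comap_adj,
    Function.Embedding.coe_subtype]
  exact e.map_adj_iff

lemma cpp_iso {V V' : Type*} {G : SimpleGraph V} {G' : SimpleGraph V'}
    (e : G ≃g G') (T : Set V) : CutPointProperty G T ↔ CutPointProperty G' (⇑e '' T) := by
  have himg : ∀ s : Set V, ⇑e '' sᶜ = (⇑e '' s)ᶜ := fun s => Set.image_compl_eq e.toEquiv.bijective
  constructor
  · rintro h j hj
    obtain ⟨i, hi, rfl⟩ := hj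
    have := h i hi
    rwa [nc_iso e, nc_iso e Tᶜ, Set.image_union, himg, Set.image_singleton] at this
  · rintro h i hi
    have := h (e i) ⟨i, hi, rfl⟩
    rw [nc_iso e (Tᶜ ∪ {i}), nc_iso e Tᶜ, Set.image_union, himg, Set.image_singleton]
    exact this

section SigmaLemmas
variable {ι : Type*} {V : ι → Type*} (G : ∀ i, SimpleGraph (V i))

def sigmaHom (i : ι) : G i →g sigmaGraph G where
  toFun v := ⟨i, v⟩
  map_rel' := fun h => ⟨rfl, h⟩

def sigmaCCEquiv : (Σ i, (G i).ConnectedComponent) ≃ (sigmaGraph G).ConnectedComponent where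
  toFun p := p.2.map (sigmaHom G p.1)
  invFun := ConnectedComponent.lift (fun x => ⟨x.1, (G x.1).connectedComponentMk x.2⟩) (by
    intro x y p hp
    clear hp
    induction p with
    | nil => rfl
    | @cons u v w huv p ih =>
      obtain ⟨i, a⟩ := u
      obtain ⟨j, b⟩ := v
      obtain ⟨heq, hadj⟩ := huv
      dsimp at heq
      subst heq
      dsimp at hadj
      refine Eq.trans ?_ ih
      show (⟨i, (G i).connectedComponentMk a⟩ : Σ k, (G k).ConnectedComponent)
          = ⟨i, (G i).connectedComponentMk b⟩
      exact congrArg (fun c => (⟨i, c⟩ : Σ k, (G k).ConnectedComponent))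
        (ConnectedComponent.sound hadj.reachable))
  left_inv := by
    rintro ⟨i, c⟩
    refine c.ind fun v => rfl
  right_inv := by
    refine ConnectedComponent.ind ?_
    rintro ⟨i, v⟩
    rfl

lemma natCard_sigma {ι' : Type*} [Fintype ι'] {f : ι' → Type*} [∀ i, Finite (f i)] :
    Nat.card (Σ i, f i) = ∑ i, Nat.card (f i) := by
  letI := fun i => Fintype.ofFinite (f i)
  simp [Nat.card_eq_fintype_card, Fintype.card_sigma]

def induceSigmaIso (S : Set (Σ i, V i)) :
    (sigmaGraph G).induce S ≃g sigmaGraph (fun i => (G i).induce {v | (⟨i, v⟩ : Σ i, V i) ∈ S}) where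
  toFun := fun x => ⟨x.1.1, ⟨x.1.2, x.2⟩⟩
  invFun := fun x => ⟨⟨x.1, x.2.1⟩, x.2.2⟩
  left_inv := by rintro ⟨⟨i, v⟩, h⟩; rfl
  right_inv := by rintro ⟨i, v, h⟩; rfl
  map_rel_iff' := by
    rintro ⟨⟨i, v⟩, hv⟩ ⟨⟨j, w⟩, hw⟩
    constructor
    · rintro ⟨h, hadj⟩
      dsimp at h
      subst h
      exact ⟨rfl, hadj⟩
    · rintro ⟨h, hadj⟩
      dsimp at h
      subst h
      exact ⟨rfl, hadj⟩

lemma nc_sigma [Fintype ι] [∀ i, Finite (V i)] (S : Set (Σ i, V i)) :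
    nc (sigmaGraph G) S = ∑ i, nc (G i) {v | (⟨i, v⟩ : Σ i, V i) ∈ S} := by
  have h1 : nc (sigmaGraph G) S
      = Nat.card (sigmaGraph (fun i => (G i).induce {v | (⟨i, v⟩ : Σ i, V i) ∈ S})).ConnectedComponent :=
    Nat.card_congr (Iso.connectedComponentEquiv (induceSigmaIso G S))
  rw [h1, ← Nat.card_congr (sigmaCCEquiv (fun i => (G i).induce {v | (⟨i, v⟩ : Σ i, V i) ∈ S})),
    natCard_sigma]
  rfl

end SigmaLemmas

section JoinLemmas
variable {V₁ V₂ : Type*} (A : SimpleGraph V₁) (B : SimpleGraph V₂)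

def induceJoinLeftIso (S : Set (V₁ ⊕ V₂)) (hS : S ⊆ Set.range Sum.inl) :
    (joinGraph A B).induce S ≃g A.induce {a | Sum.inl a ∈ S} where
  toFun := fun x => match x with
    | ⟨Sum.inl a, h⟩ => ⟨a, h⟩
    | ⟨Sum.inr _, h⟩ => absurd (hS h) (by simp)
  invFun := fun a => ⟨Sum.inl a.1, a.2⟩
  left_inv := by
    rintro ⟨x, h⟩
    cases x with
    | inl a => rfl
    | inr b => exact absurd (hS h) (by simp)
  right_inv := by rintro ⟨a, h⟩; rfl
  map_rel_iff' := by
    rintro ⟨x, hx⟩ ⟨y, hy⟩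
    cases x with
    | inl a =>
      cases y with
      | inl b => exact Iff.rfl
      | inr b => exact absurd (hS hy) (by simp)
    | inr a => exact absurd (hS hx) (by simp)

lemma nc_join_left (S : Set (V₁ ⊕ V₂)) (hS : S ⊆ Set.range Sum.inl) :
    nc (joinGraph A B) S = nc A {a | Sum.inl a ∈ S} :=
  nc_induce_iso (induceJoinLeftIso A B S hS)

lemma nc_join_both (S : Set (V₁ ⊕ V₂)) (h1 : ∃ a, Sum.inl a ∈ S) (h2 : ∃ b, Sum.inr b ∈ S) :
    nc (joinGraph A B) S = 1 := by
  obtain ⟨a, ha⟩ := h1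
  obtain ⟨b, hb⟩ := h2
  have hub : ∀ x : S, ((joinGraph A B).induce S).Reachable x ⟨Sum.inr b, hb⟩ := by
    rintro ⟨x, hx⟩
    cases x with
    | inl c =>
      exact SimpleGraph.Adj.reachable (by trivial)
    | inr d =>
      have h1 : ((joinGraph A B).induce S).Adj ⟨Sum.inr d, hx⟩ ⟨Sum.inl a, ha⟩ := by trivial
      have h2 : ((joinGraph A B).induce S).Adj ⟨Sum.inl a, ha⟩ ⟨Sum.inr b, hb⟩ := by trivial
      exact h1.reachable.trans h2.reachable
  have hconn : ((joinGraph A B).induce S).Preconnected :=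
    fun x y => (hub x).trans (hub y).symm
  rw [nc, Nat.card_eq_one_iff_unique]
  constructor
  · exact ⟨ConnectedComponent.ind₂ fun u v => ConnectedComponent.sound (hconn u v)⟩
  · exact ⟨(joinGraph A B).induce S |>.connectedComponentMk ⟨Sum.inr b, hb⟩⟩

def joinComm : joinGraph A B ≃g joinGraph B A where
  toEquiv := Equiv.sumComm V₁ V₂
  map_rel_iff' := @fun x y => by cases x <;> cases y <;> exact Iff.rfl

end JoinLemmas

lemma sum_lt_sum_iff_of_eq {ι : Type*} [Fintype ι] [DecidableEq ι] (f g : ι → ℕ) (k : ι)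
    (h : ∀ i ≠ k, f i = g i) : ((∑ i, f i) < ∑ i, g i) ↔ f k < g k := by
  rw [← Finset.sum_erase_add _ f (Finset.mem_univ k), ← Finset.sum_erase_add _ g (Finset.mem_univ k)]
  have he : ∑ i ∈ Finset.univ.erase k, f i = ∑ i ∈ Finset.univ.erase k, g i :=
    Finset.sum_congr rfl (fun i hi => h i (Finset.ne_of_mem_erase hi))
  rw [he]
  omega

lemma cpp_not_univ {X : Type*} [Finite X] [Nonempty X] (G : SimpleGraph X)
    (h : CutPointProperty G Set.univ) : False := by
  obtain ⟨v⟩ := ‹Nonempty X›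
  have h1 := h v (Set.mem_univ v)
  rw [Set.compl_univ, nc_empty_of_isEmpty G ∅ (by simp)] at h1
  omega

section Key
variable {ι : Type*} [Fintype ι] {V : ι → Type*} [∀ i, Fintype (V i)] {N : Type*}

lemma keyLemma (hι : 2 ≤ Fintype.card ι) (G₁ : ∀ i, SimpleGraph (V i))
    (hG₁ : ∀ i, (G₁ i).Connected) (H : SimpleGraph N)
    (T : Set ((Σ i, V i) ⊕ N)) (hsub : Set.range Sum.inr ⊆ T) :
    CutPointProperty (joinGraph (sigmaGraph G₁) H) T ↔
      ∀ i, CutPointProperty (G₁ i) {v | Sum.inl ⟨i, v⟩ ∈ T} := by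
  classical
  have hTc : Tᶜ ⊆ Set.range Sum.inl := by
    rw [← Set.compl_range_inr]
    exact Set.compl_subset_compl.mpr hsub
  have hnc1 : ∀ S : Set ((Σ i, V i) ⊕ N), S ⊆ Set.range Sum.inl →
      nc (joinGraph (sigmaGraph G₁) H) S = ∑ j, nc (G₁ j) {v | Sum.inl ⟨j, v⟩ ∈ S} := by
    intro S hS
    rw [nc_join_left _ _ _ hS, nc_sigma]
    rfl
  have hfib : ∀ (k : ι) (v : V k) (j : ι), j ≠ k →
      {u | Sum.inl ⟨j, u⟩ ∈ Tᶜ ∪ {Sum.inl ⟨k, v⟩}} = {u | Sum.inl ⟨j, u⟩ ∈ Tᶜ} := by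
    intro k v j hjk
    ext u
    simp [hjk]
  have hfibk : ∀ (k : ι) (v : V k),
      {u | Sum.inl ⟨k, u⟩ ∈ Tᶜ ∪ {Sum.inl ⟨k, v⟩}} = {u | Sum.inl ⟨k, u⟩ ∈ T}ᶜ ∪ {v} := by
    intro k v
    ext u
    simp
  have hmain : ∀ (k : ι) (v : V k),
      (nc (joinGraph (sigmaGraph G₁) H) (Tᶜ ∪ {Sum.inl ⟨k, v⟩}) <
        nc (joinGraph (sigmaGraph G₁) H) Tᶜ ↔
      nc (G₁ k) ({u | Sum.inl ⟨k, u⟩ ∈ T}ᶜ ∪ {v}) < nc (G₁ k) {u | Sum.inl ⟨k, u⟩ ∈ T}ᶜ) := by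
    intro k v
    rw [hnc1 _ (Set.union_subset hTc (by simp)), hnc1 _ hTc]
    refine (sum_lt_sum_iff_of_eq _ _ k ?_).trans ?_
    · intro j hj
      exact congrArg (nc (G₁ j)) (hfib k v j hj)
    have e2 : {u | Sum.inl ⟨k, u⟩ ∈ Tᶜ} = {u | Sum.inl ⟨k, u⟩ ∈ T}ᶜ := rfl
    rw [hfibk k v, e2]
  constructor
  · intro h k v hv
    exact (hmain k v).mp (h _ hv)
  · intro h x hx
    have hproper : ∀ j, ({v | Sum.inl ⟨j, v⟩ ∈ T})ᶜ.Nonempty := by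
      intro j
      by_contra hc
      rw [Set.not_nonempty_iff_eq_empty, Set.compl_empty_iff] at hc
      have : Nonempty (V j) := (hG₁ j).nonempty
      exact cpp_not_univ (G₁ j) (hc ▸ h j)
    have hTcge : 2 ≤ nc (joinGraph (sigmaGraph G₁) H) Tᶜ := by
      rw [hnc1 _ hTc]
      have h1 : ∀ j, 1 ≤ nc (G₁ j) {v | Sum.inl ⟨j, v⟩ ∈ Tᶜ} :=
        fun j => nc_pos _ _ (hproper j)
      calc 2 ≤ Fintype.card ι := hι
        _ = ∑ _j : ι, 1 := by simp
        _ ≤ ∑ j, nc (G₁ j) {v | Sum.inl ⟨j, v⟩ ∈ Tᶜ} := Finset.sum_le_sum fun j _ => h1 j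
    cases x with
    | inr w =>
      have hne : Nonempty ι := Fintype.card_pos_iff.mp (by omega)
      obtain ⟨u, hu⟩ := hproper (Classical.arbitrary ι)
      have h1 : nc (joinGraph (sigmaGraph G₁) H) (Tᶜ ∪ {Sum.inr w}) = 1 :=
        nc_join_both _ _ _ ⟨⟨_, u⟩, Or.inl hu⟩ ⟨w, Or.inr rfl⟩
      rw [h1]
      omega
    | inl x =>
      obtain ⟨k, v⟩ := x
      exact (hmain k v).mpr (h k v hx)

lemma keyLemma' (hι : 2 ≤ Fintype.card ι) (G₁ : ∀ i, SimpleGraph (V i))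
    (hG₁ : ∀ i, (G₁ i).Connected) (H : SimpleGraph N)
    (T : Set (N ⊕ (Σ i, V i))) (hsub : Set.range Sum.inl ⊆ T) :
    CutPointProperty (joinGraph H (sigmaGraph G₁)) T ↔
      ∀ i, CutPointProperty (G₁ i) {v | Sum.inr ⟨i, v⟩ ∈ T} := by
  rw [cpp_iso (joinComm H (sigmaGraph G₁)) T]
  have hset : ∀ i, {v | Sum.inl ⟨i, v⟩ ∈ ⇑(joinComm H (sigmaGraph G₁)) '' T}
      = {v | Sum.inr ⟨i, v⟩ ∈ T} := by
    intro i
    ext v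
    constructor
    · rintro ⟨t, ht, hts⟩
      cases t with
      | inl n => exact absurd hts (by simp [joinComm])
      | inr x =>
        have hx : x = ⟨i, v⟩ := by simpa [joinComm] using hts
        subst hx
        exact ht
    · intro hv
      exact ⟨Sum.inr ⟨i, v⟩, hv, rfl⟩
  rw [keyLemma hι G₁ hG₁ H _ (by
    rintro x ⟨a, rfl⟩
    exact ⟨Sum.inl a, hsub ⟨a, rfl⟩, rfl⟩)]
  exact forall_congr' fun i => by rw [hset i]

end Key

/-- the nonempty sets with the cut point property for the join of two disjoint
unions of connected graphs (`r, s ≥ 2`). -/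
theorem stmt3 {r s : ℕ} (hr : 2 ≤ r) (hs : 2 ≤ s)
    {V : Fin r → Type*} {W : Fin s → Type*}
    [∀ i, Fintype (V i)] [∀ j, Fintype (W j)]
    (G₁ : ∀ i, SimpleGraph (V i)) (G₂ : ∀ j, SimpleGraph (W j))
    (hG₁ : ∀ i, (G₁ i).Connected) (hG₂ : ∀ j, (G₂ j).Connected)
    (T : Set ((Σ i, V i) ⊕ (Σ j, W j))) (hT : T.Nonempty) :
    CutPointProperty (joinGraph (sigmaGraph G₁) (sigmaGraph G₂)) T ↔
      (∃ T₁ : ∀ i, Set (V i), (∀ i, CutPointProperty (G₁ i) (T₁ i)) ∧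
        T = Set.range Sum.inr ∪ Sum.inl '' {x : Σ i, V i | x.2 ∈ T₁ x.1}) ∨
      (∃ T₂ : ∀ j, Set (W j), (∀ j, CutPointProperty (G₂ j) (T₂ j)) ∧
        T = Set.range Sum.inl ∪ Sum.inr '' {x : Σ j, W j | x.2 ∈ T₂ x.1}) := by
  classical
  have hrcard : 2 ≤ Fintype.card (Fin r) := by simpa
  have hscard : 2 ≤ Fintype.card (Fin s) := by simpa
  constructor
  · intro hcpp
    obtain ⟨x₀, hx₀⟩ := hT
    have hsplit : Tᶜ ⊆ Set.range Sum.inl ∨ Tᶜ ⊆ Set.range Sum.inr := by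
      by_contra hc
      push_neg at hc
      obtain ⟨h1, h2⟩ := hc
      obtain ⟨x, hx, hxl⟩ := Set.not_subset.mp h1
      obtain ⟨y, hy, hyr⟩ := Set.not_subset.mp h2
      obtain ⟨b, rfl⟩ : ∃ b, x = Sum.inr b := by
        cases x with
        | inl a => exact absurd ⟨a, rfl⟩ hxl
        | inr b => exact ⟨b, rfl⟩
      obtain ⟨a, rfl⟩ : ∃ a, y = Sum.inl a := by
        cases y with
        | inl a => exact ⟨a, rfl⟩
        | inr b => exact absurd ⟨b, rfl⟩ hyr
      have e1 : nc (joinGraph (sigmaGraph G₁) (sigmaGraph G₂)) Tᶜ = 1 :=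
        nc_join_both _ _ _ ⟨a, hy⟩ ⟨b, hx⟩
      have e2 : nc (joinGraph (sigmaGraph G₁) (sigmaGraph G₂)) (Tᶜ ∪ {x₀}) = 1 :=
        nc_join_both _ _ _ ⟨a, Or.inl hy⟩ ⟨b, Or.inl hx⟩
      have e3 := hcpp x₀ hx₀
      rw [e1, e2] at e3
      omega
    cases hsplit with
    | inl hleft =>
      left
      have hsub : Set.range Sum.inr ⊆ T := by
        intro z hz
        by_contra hzT
        obtain ⟨w, rfl⟩ := hz
        obtain ⟨u, hu⟩ := hleft hzT
        exact Sum.inl_ne_inr hu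
      refine ⟨fun i => {v | Sum.inl ⟨i, v⟩ ∈ T},
        (keyLemma hrcard G₁ hG₁ _ T hsub).mp hcpp, ?_⟩
      ext y
      cases y with
      | inl x =>
        obtain ⟨i, v⟩ := x
        simp
      | inr w =>
        simp [hsub ⟨w, rfl⟩]
    | inr hright =>
      right
      have hsub : Set.range Sum.inl ⊆ T := by
        intro z hz
        by_contra hzT
        obtain ⟨w, rfl⟩ := hz
        obtain ⟨u, hu⟩ := hright hzT
        exact Sum.inl_ne_inr hu.symm
      refine ⟨fun j => {w | Sum.inr ⟨j, w⟩ ∈ T},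
        (keyLemma' hscard G₂ hG₂ _ T hsub).mp hcpp, ?_⟩
      ext y
      cases y with
      | inl a =>
        simp [hsub ⟨a, rfl⟩]
      | inr x =>
        obtain ⟨j, w⟩ := x
        simp
  · rintro (⟨T₁, h₁, rfl⟩ | ⟨T₂, h₂, rfl⟩)
    · refine (keyLemma hrcard G₁ hG₁ _ _ Set.subset_union_left).mpr ?_
      intro i
      have hfib : {v | (Sum.inl ⟨i, v⟩ : (Σ i, V i) ⊕ (Σ j, W j)) ∈
          Set.range Sum.inr ∪ Sum.inl '' {x : Σ i, V i | x.2 ∈ T₁ x.1}} = T₁ i := by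
        ext v
        simp
      rw [hfib]
      exact h₁ i
    · refine (keyLemma' hscard G₂ hG₂ _ _ Set.subset_union_left).mpr ?_
      intro j
      have hfib : {w | (Sum.inr ⟨j, w⟩ : (Σ i, V i) ⊕ (Σ j, W j)) ∈
          Set.range Sum.inl ∪ Sum.inr '' {x : Σ j, W j | x.2 ∈ T₂ x.1}} = T₂ j := by
        ext w
        simp
      rw [hfib]
      exact h₂ j
end

section
/- Let $H$ and $H'$ be connected graphs on disjoint vertex sets $[n_1]$ and $[n_2]$. A nonempty subset $T'$ of the vertices of the corona $H \odot H'$ has the cut point property if and only if $T' = T \cup \bigcup_{v \in T} T_v$, where $\emptyset \neq T \subseteq [n_1]$, each $T_v \in \mathcal{C}(H'_v)$ (the copy of $H'$ attached to $v$), and for every $v \in T$ with $N_H(v) \subseteq T$ one has $T_v \neq \emptyset$. -/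
open SimpleGraph Set

set_option linter.unusedSectionVars false

section Helpers
variable {V : Type*} {β : Sort*} {G : SimpleGraph V}

lemma eq_of_reachable' {f : V → β} (h : ∀ v w, G.Adj v w → f v = f w)
    {v w : V} (hr : G.Reachable v w) : f v = f w := by
  obtain ⟨p⟩ := hr
  induction p with
  | nil => rfl
  | cons a _ ih => exact (h _ _ a).trans ih

def liftAdj (f : V → β) (h : ∀ v w, G.Adj v w → f v = f w) :
    G.ConnectedComponent → β :=
  Quot.lift f fun _ _ hr => eq_of_reachable' h hr

@[simp] lemma liftAdj_mk (f : V → β) (h) (v : V) :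
    liftAdj f h (G.connectedComponentMk v) = f v := rfl

variable (G) in
/-- inclusion-induced map on components -/
def compIncl (v : V) (s : Set V) :
    (G.induce s).ConnectedComponent → (G.induce (insert v s)).ConnectedComponent :=
  liftAdj (fun x => (G.induce (insert v s)).connectedComponentMk
      ⟨x.1, Set.mem_insert_of_mem v x.2⟩)
    (fun _ _ hadj => ConnectedComponent.connectedComponentMk_eq_of_adj hadj)

variable (G) in
def compExt (v : V) (s : Set V) :
    (G.induce s).ConnectedComponent ⊕ Unit → (G.induce (insert v s)).ConnectedComponent :=
  Sum.elim (compIncl G v s)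
    (fun _ => (G.induce (insert v s)).connectedComponentMk ⟨v, Set.mem_insert v s⟩)

lemma compExt_surj (v : V) (s : Set V) : Function.Surjective (compExt G v s) := by
  intro c
  induction c using ConnectedComponent.ind with
  | _ x =>
    obtain ⟨z, hz⟩ := x
    rcases hz with hz | hz
    · subst hz
      exact ⟨Sum.inr Unit.unit, rfl⟩
    · exact ⟨Sum.inl ((G.induce s).connectedComponentMk ⟨z, hz⟩), rfl⟩

lemma nc_insert_le [Finite V] (v : V) (s : Set V) :
    nc G (insert v s) ≤ nc G s + 1 := by
  have h := Nat.card_le_card_of_surjective _ (compExt_surj (G := G) v s)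
  have hp : Nat.card Unit = 1 := Nat.card_unique
  rw [Nat.card_sum, hp] at h
  exact h

lemma nc_insert_le_of_adj [Finite V] {v u : V} {s : Set V} (hu : u ∈ s) (ha : G.Adj v u) :
    nc G (insert v s) ≤ nc G s := by
  refine Nat.card_le_card_of_surjective (compIncl G v s) ?_
  intro c
  induction c using ConnectedComponent.ind with
  | _ x =>
    obtain ⟨z, hz⟩ := x
    rcases hz with hz | hz
    · subst hz
      refine ⟨(G.induce s).connectedComponentMk ⟨u, hu⟩, ?_⟩
      exact ConnectedComponent.connectedComponentMk_eq_of_adj (by exact ha.symm)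
    · exact ⟨(G.induce s).connectedComponentMk ⟨z, hz⟩, rfl⟩

lemma reach_restrict {v : V} {s : Set V} (hv : ∀ u ∈ s, ¬ G.Adj v u)
    {x y : ↥(insert v s)} (p : (G.induce (insert v s)).Walk x y) (hx : x.1 ∈ s) :
    ∃ hy : y.1 ∈ s, (G.induce s).Reachable ⟨x.1, hx⟩ ⟨y.1, hy⟩ := by
  induction p with
  | nil => exact ⟨hx, Reachable.refl _⟩
  | @cons a b c ha p ih =>
    have hb : b.1 ∈ s := by
      rcases b.2 with hb | hb
      · have hav : G.Adj a.1 b.1 := ha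
        rw [hb] at hav
        exact absurd hav (fun h => hv _ hx h.symm)
      · exact hb
    obtain ⟨hy, hr⟩ := ih hb
    exact ⟨hy, (Adj.reachable (show (G.induce s).Adj ⟨a.1, hx⟩ ⟨b.1, hb⟩ from ha)).trans hr⟩

lemma nc_insert_eq [Finite V] {v : V} {s : Set V} (hvs : v ∉ s)
    (hv : ∀ u ∈ s, ¬ G.Adj v u) :
    nc G (insert v s) = nc G s + 1 := by
  have hinj : Function.Injective (compExt G v s) := by
    have h1 : ∀ (c d : (G.induce s).ConnectedComponent),
        compIncl G v s c = compIncl G v s d → c = d := by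
      refine ConnectedComponent.ind₂ ?_
      intro x y h
      obtain ⟨p⟩ := ConnectedComponent.exact h
      obtain ⟨hy, hr⟩ := reach_restrict hv p x.2
      exact ConnectedComponent.sound hr
    have h2 : ∀ (c : (G.induce s).ConnectedComponent),
        compIncl G v s c ≠ (G.induce (insert v s)).connectedComponentMk
          ⟨v, Set.mem_insert v s⟩ := by
      refine ConnectedComponent.ind ?_
      intro x h
      obtain ⟨p⟩ := ConnectedComponent.exact h
      obtain ⟨hy, _⟩ := reach_restrict hv p x.2
      exact hvs hy
    rintro (c | ⟨⟩) (d | ⟨⟩) h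
    · exact congrArg Sum.inl (h1 c d h)
    · exact absurd h (h2 c)
    · exact absurd h.symm (h2 d)
    · rfl
  have h := Nat.card_eq_of_bijective _ ⟨hinj, compExt_surj (G := G) v s⟩
  have hp : Nat.card Unit = 1 := Nat.card_unique
  rw [Nat.card_sum, hp] at h
  exact h.symm

lemma one_le_nc [Finite V] {s : Set V} (hs : s.Nonempty) : 1 ≤ nc G s := by
  obtain ⟨x, hx⟩ := hs
  have : Nonempty (G.induce s).ConnectedComponent :=
    ⟨(G.induce s).connectedComponentMk ⟨x, hx⟩⟩
  exact Nat.card_pos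

lemma nc_univ_eq_one [Finite V] (h : G.Connected) : nc G univ = 1 := by
  have hc : G.Connected := h
  have : (G.induce Set.univ).Connected := by
    rw [← (induceUnivIso G).connected_iff] at hc
    exact hc
  rw [nc, Nat.card_eq_one_iff_unique]
  exact ⟨this.preconnected.subsingleton_connectedComponent,
    ⟨(G.induce Set.univ).connectedComponentMk this.nonempty.some⟩⟩

end Helpers

section Corona
open Classical

variable {V₁ V₂ : Type*} [Fintype V₁] [Fintype V₂] (H : SimpleGraph V₁) (H' : SimpleGraph V₂)

def TA (S : Set (V₁ ⊕ V₁ × V₂)) : Set V₁ := {v | Sum.inl v ∈ S}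
def TSv (S : Set (V₁ ⊕ V₁ × V₂)) (v : V₁) : Set V₂ := {w | Sum.inr (v, w) ∈ S}

variable (S : Set (V₁ ⊕ V₁ × V₂))

/-- target type for the component decomposition of an induced subgraph of a corona -/
abbrev CoronaTarget : Type _ :=
  (H.induce (TA S)).ConnectedComponent ⊕
    (Σ v : {v : V₁ // Sum.inl v ∉ S}, (H'.induce (TSv S v.1)).ConnectedComponent)

noncomputable def coronaFAux : ∀ z : V₁ ⊕ V₁ × V₂, z ∈ S → CoronaTarget H H' S
  | Sum.inl v, h => Sum.inl ((H.induce (TA S)).connectedComponentMk ⟨v, h⟩)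
  | Sum.inr p, h =>
      if hv : Sum.inl p.1 ∈ S then
        Sum.inl ((H.induce (TA S)).connectedComponentMk ⟨p.1, hv⟩)
      else
        Sum.inr ⟨⟨p.1, hv⟩, (H'.induce (TSv S p.1)).connectedComponentMk ⟨p.2, h⟩⟩

lemma coronaFAux_adj : ∀ (x y : ↥S), ((coronaGraph H H').induce S).Adj x y →
    coronaFAux H H' S x.1 x.2 = coronaFAux H H' S y.1 y.2 := by
  rintro ⟨a | ⟨a, w⟩, hx⟩ ⟨b | ⟨b, w'⟩, hy⟩ hadj
  · exact congrArg Sum.inl (ConnectedComponent.connectedComponentMk_eq_of_adj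
      (show (H.induce (TA S)).Adj ⟨a, hx⟩ ⟨b, hy⟩ from hadj))
  · have h : a = b := hadj
    subst h
    show _ = coronaFAux H H' S (Sum.inr (a, w')) hy
    rw [show coronaFAux H H' S (Sum.inr (a, w')) hy =
      if hv : Sum.inl a ∈ S then
        Sum.inl ((H.induce (TA S)).connectedComponentMk ⟨a, hv⟩)
      else Sum.inr ⟨⟨a, hv⟩, (H'.induce (TSv S a)).connectedComponentMk ⟨w', hy⟩⟩ from rfl,
      dif_pos hx]
    rfl
  · have h : a = b := hadj
    subst h
    show coronaFAux H H' S (Sum.inr (a, w)) hx = _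
    rw [show coronaFAux H H' S (Sum.inr (a, w)) hx =
      if hv : Sum.inl a ∈ S then
        Sum.inl ((H.induce (TA S)).connectedComponentMk ⟨a, hv⟩)
      else Sum.inr ⟨⟨a, hv⟩, (H'.induce (TSv S a)).connectedComponentMk ⟨w, hx⟩⟩ from rfl,
      dif_pos hy]
    rfl
  · obtain ⟨h1, h2⟩ : a = b ∧ H'.Adj w w' := hadj
    subst h1
    show coronaFAux H H' S (Sum.inr (a, w)) hx = coronaFAux H H' S (Sum.inr (a, w')) hy
    by_cases hv : Sum.inl a ∈ S
    · rw [show coronaFAux H H' S (Sum.inr (a, w)) hx = dite _ _ _ from rfl, dif_pos hv,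
        show coronaFAux H H' S (Sum.inr (a, w')) hy = dite _ _ _ from rfl, dif_pos hv]
    · rw [show coronaFAux H H' S (Sum.inr (a, w)) hx = dite _ _ _ from rfl, dif_neg hv,
        show coronaFAux H H' S (Sum.inr (a, w')) hy = dite _ _ _ from rfl, dif_neg hv]
      exact congrArg _ (congrArg _ (ConnectedComponent.connectedComponentMk_eq_of_adj
        (show (H'.induce (TSv S a)).Adj ⟨w, hx⟩ ⟨w', hy⟩ from h2)))

noncomputable def coronaF : ((coronaGraph H H').induce S).ConnectedComponent →
    CoronaTarget H H' S :=
  liftAdj (fun x => coronaFAux H H' S x.1 x.2) (coronaFAux_adj H H' S)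

noncomputable def coronaG : CoronaTarget H H' S →
    ((coronaGraph H H').induce S).ConnectedComponent :=
  Sum.elim
    (liftAdj (fun v => ((coronaGraph H H').induce S).connectedComponentMk ⟨Sum.inl v.1, v.2⟩)
      (fun v w hadj => ConnectedComponent.connectedComponentMk_eq_of_adj
        (show ((coronaGraph H H').induce S).Adj ⟨Sum.inl v.1, v.2⟩ ⟨Sum.inl w.1, w.2⟩ from hadj)))
    (fun t => liftAdj
      (fun w => ((coronaGraph H H').induce S).connectedComponentMk ⟨Sum.inr (t.1.1, w.1), w.2⟩)
      (fun w w' hadj => ConnectedComponent.connectedComponentMk_eq_of_adj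
        (show ((coronaGraph H H').induce S).Adj ⟨Sum.inr (t.1.1, w.1), _⟩ ⟨Sum.inr (t.1.1, w'.1), _⟩
          from ⟨rfl, hadj⟩)) t.2)

lemma coronaGF : Function.LeftInverse (coronaG H H' S) (coronaF H H' S) := by
  intro c
  induction c using ConnectedComponent.ind with
  | _ x =>
    obtain ⟨a | ⟨a, w⟩, hx⟩ := x
    · rfl
    · show coronaG H H' S (coronaFAux H H' S (Sum.inr (a, w)) hx) = _
      by_cases hv : Sum.inl a ∈ S
      · rw [show coronaFAux H H' S (Sum.inr (a, w)) hx = dite _ _ _ from rfl, dif_pos hv]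
        exact ConnectedComponent.connectedComponentMk_eq_of_adj
          (show ((coronaGraph H H').induce S).Adj ⟨Sum.inl a, hv⟩ ⟨Sum.inr (a, w), hx⟩ from rfl)
      · rw [show coronaFAux H H' S (Sum.inr (a, w)) hx = dite _ _ _ from rfl, dif_neg hv]
        rfl

lemma coronaFG : Function.RightInverse (coronaG H H' S) (coronaF H H' S) := by
  rintro (c | ⟨v, c⟩)
  · induction c using ConnectedComponent.ind with
    | _ x => rfl
  · induction c using ConnectedComponent.ind with
    | _ w =>
      show coronaFAux H H' S (Sum.inr (v.1, w.1)) w.2 = _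
      rw [show coronaFAux H H' S (Sum.inr (v.1, w.1)) w.2 = dite _ _ _ from rfl, dif_neg v.2]

lemma nc_corona : nc (coronaGraph H H') S =
    nc H (TA S) + ∑ v ∈ Finset.univ.filter (fun v => Sum.inl v ∉ S), nc H' (TSv S v) := by
  have hbij : Function.Bijective (coronaF H H' S) :=
    Function.bijective_iff_has_inverse.mpr ⟨coronaG H H' S, coronaGF H H' S, coronaFG H H' S⟩
  rw [nc, Nat.card_eq_of_bijective _ hbij, Nat.card_sum]
  congr 1
  letI : ∀ v : {v : V₁ // Sum.inl v ∉ S}, Fintype (H'.induce (TSv S v.1)).ConnectedComponent :=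
    fun v => Fintype.ofFinite _
  letI : Fintype {v : V₁ // Sum.inl v ∉ S} := Fintype.ofFinite _
  rw [Nat.card_eq_fintype_card, Fintype.card_sigma]
  rw [Finset.sum_subtype (p := fun v => Sum.inl v ∉ S)
    (Finset.univ.filter (fun v => Sum.inl v ∉ S)) (by intro x; simp) (fun v => nc H' (TSv S v))]
  exact Finset.sum_congr rfl (fun v _ => (Nat.card_eq_fintype_card).symm)

end Corona


section Main
open Classical in
noncomputable def dT {V₁ V₂ : Type*} (T' : Set (V₁ ⊕ V₁ × V₂)) : Set V₁ :=
  {u | Sum.inl u ∈ T'}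

def dTv {V₁ V₂ : Type*} (T' : Set (V₁ ⊕ V₁ × V₂)) (u : V₁) : Set V₂ :=
  {w | Sum.inr (u, w) ∈ T'}

open Classical

variable {V₁ V₂ : Type*} [Fintype V₁] [Fintype V₂] {H : SimpleGraph V₁} {H' : SimpleGraph V₂}

lemma nc_compl (T' : Set (V₁ ⊕ V₁ × V₂)) : nc (coronaGraph H H') T'ᶜ
    = nc H (dT T')ᶜ + ∑ u ∈ Finset.univ.filter (fun u => u ∈ dT T'), nc H' (dTv T' u)ᶜ := by
  rw [nc_corona]
  have h1 : TA (T'ᶜ) = (dT T')ᶜ := by ext u; simp [TA, dT]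
  have h2 : ∀ u, TSv (T'ᶜ) u = (dTv T' u)ᶜ := fun u => by ext w; simp [TSv, dTv]
  rw [h1]
  refine congrArg _ (Finset.sum_congr ?_ fun u _ => by rw [h2])
  ext u; simp; exact Iff.rfl

lemma nc_inl (T' : Set (V₁ ⊕ V₁ × V₂)) (v : V₁) (hv : Sum.inl v ∈ T') :
    nc (coronaGraph H H') (T'ᶜ ∪ {Sum.inl v})
    = nc H (insert v (dT T')ᶜ) +
      ∑ u ∈ (Finset.univ.filter (fun u : V₁ => u ∈ dT T')).erase v, nc H' (dTv T' u)ᶜ := by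
  rw [nc_corona]
  have h1 : TA (T'ᶜ ∪ {Sum.inl v}) = insert v (dT T')ᶜ := by
    ext u; simp [TA, dT, Set.mem_insert_iff, or_comm]
  have h2 : ∀ u, TSv (T'ᶜ ∪ {Sum.inl v}) u = (dTv T' u)ᶜ := fun u => by
    ext w; simp [TSv, dTv]
  rw [h1]
  refine congrArg _ (Finset.sum_congr ?_ fun u _ => by rw [h2])
  ext u
  simp only [Finset.mem_filter, Finset.mem_univ, true_and, Finset.mem_erase,
    Set.mem_union, Set.mem_compl_iff, Set.mem_singleton_iff, not_or, Sum.inl.injEq, dT,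
    Set.mem_setOf_eq]
  constructor
  · rintro ⟨h, hne⟩; exact ⟨hne, not_not.mp h⟩
  · rintro ⟨hne, h⟩; exact ⟨not_not.mpr h, hne⟩

lemma nc_inr (T' : Set (V₁ ⊕ V₁ × V₂)) (v : V₁) (w : V₂) :
    nc (coronaGraph H H') (T'ᶜ ∪ {Sum.inr (v, w)})
    = nc H (dT T')ᶜ + ∑ u ∈ Finset.univ.filter (fun u : V₁ => u ∈ dT T'),
        nc H' (if u = v then insert w (dTv T' v)ᶜ else (dTv T' u)ᶜ) := by
  rw [nc_corona]
  have h1 : TA (T'ᶜ ∪ {Sum.inr (v, w)}) = (dT T')ᶜ := by ext u; simp [TA, dT]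
  have h2 : ∀ u, TSv (T'ᶜ ∪ {Sum.inr (v, w)}) u =
      (if u = v then insert w (dTv T' v)ᶜ else (dTv T' u)ᶜ) := by
    intro u
    by_cases huv : u = v
    · subst huv
      rw [if_pos rfl]
      ext w'
      simp only [TSv, dTv, Set.mem_setOf_eq, Set.mem_union, Set.mem_compl_iff,
        Set.mem_singleton_iff, Set.mem_insert_iff, Sum.inr.injEq, Prod.mk.injEq, true_and]
      tauto
    · rw [if_neg huv]
      ext w'
      simp only [TSv, dTv, Set.mem_setOf_eq, Set.mem_union, Set.mem_compl_iff,
        Set.mem_singleton_iff, Sum.inr.injEq, Prod.mk.injEq]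
      constructor
      · rintro (h | ⟨h, _⟩)
        · exact h
        · exact absurd h huv
      · exact Or.inl
  rw [h1]
  refine congrArg _ (Finset.sum_congr ?_ fun u _ => by rw [h2])
  ext u; simp; exact Iff.rfl

lemma mem_filter_dT {T' : Set (V₁ ⊕ V₁ × V₂)} {v : V₁} (hv : v ∈ dT T') :
    v ∈ Finset.univ.filter (fun u : V₁ => u ∈ dT T') := by
  simp only [Finset.mem_filter, Finset.mem_univ, true_and]; exact hv

lemma cpp_iff_inl {T' : Set (V₁ ⊕ V₁ × V₂)} {v : V₁} (hv : Sum.inl v ∈ T') :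
    (nc (coronaGraph H H') (T'ᶜ ∪ {Sum.inl v}) < nc (coronaGraph H H') T'ᶜ) ↔
    nc H (insert v (dT T')ᶜ) < nc H (dT T')ᶜ + nc H' (dTv T' v)ᶜ := by
  rw [nc_compl, nc_inl T' v hv,
    ← Finset.add_sum_erase _ (fun u => nc H' (dTv T' u)ᶜ) (mem_filter_dT hv)]
  omega

lemma cpp_iff_inr {T' : Set (V₁ ⊕ V₁ × V₂)} {v : V₁} {w : V₂} (hv : v ∈ dT T') :
    (nc (coronaGraph H H') (T'ᶜ ∪ {Sum.inr (v, w)}) < nc (coronaGraph H H') T'ᶜ) ↔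
    nc H' (insert w (dTv T' v)ᶜ) < nc H' (dTv T' v)ᶜ := by
  rw [nc_compl, nc_inr T' v w,
    ← Finset.add_sum_erase _ (fun u => nc H' (dTv T' u)ᶜ) (mem_filter_dT hv),
    ← Finset.add_sum_erase _
      (fun u => nc H' (if u = v then insert w (dTv T' v)ᶜ else (dTv T' u)ᶜ)) (mem_filter_dT hv),
    if_pos rfl]
  have hs : ∑ u ∈ (Finset.univ.filter (fun u : V₁ => u ∈ dT T')).erase v,
      nc H' (if u = v then insert w (dTv T' v)ᶜ else (dTv T' u)ᶜ)
      = ∑ u ∈ (Finset.univ.filter (fun u : V₁ => u ∈ dT T')).erase v, nc H' (dTv T' u)ᶜ :=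
    Finset.sum_congr rfl fun u hu => by rw [if_neg (Finset.ne_of_mem_erase hu)]
  rw [hs]
  omega

lemma nc_inr_not_mem {T' : Set (V₁ ⊕ V₁ × V₂)} {v : V₁} (w : V₂) (hv : v ∉ dT T') :
    nc (coronaGraph H H') (T'ᶜ ∪ {Sum.inr (v, w)}) = nc (coronaGraph H H') T'ᶜ := by
  rw [nc_compl, nc_inr T' v w]
  congr 1
  refine Finset.sum_congr rfl fun u hu => ?_
  have : u ∈ dT T' := by simpa using hu
  rw [if_neg (by rintro rfl; exact hv this)]

end Main

/-- the nonempty sets with the cut point property for the corona `H ⊙ H'`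
of two connected graphs. -/
theorem stmt4 {V₁ V₂ : Type*} [Fintype V₁] [Fintype V₂]
    (H : SimpleGraph V₁) (H' : SimpleGraph V₂)
    (hH : H.Connected) (hH' : H'.Connected)
    (T' : Set (V₁ ⊕ V₁ × V₂)) (hT' : T'.Nonempty) :
    CutPointProperty (coronaGraph H H') T' ↔
      ∃ (T : Set V₁) (Tv : V₁ → Set V₂), T.Nonempty ∧
        (∀ v ∈ T, CutPointProperty H' (Tv v)) ∧
        (∀ v ∈ T, H.neighborSet v ⊆ T → (Tv v).Nonempty) ∧
        T' = Sum.inl '' T ∪ Sum.inr '' {p : V₁ × V₂ | p.1 ∈ T ∧ p.2 ∈ Tv p.1} := by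
  classical
  constructor
  · intro h
    have hinr : ∀ v w, Sum.inr (v, w) ∈ T' → v ∈ dT T' := by
      intro v w hw
      by_contra hv
      have hlt := h _ hw
      rw [nc_inr_not_mem w hv] at hlt
      exact lt_irrefl _ hlt
    refine ⟨dT T', dTv T', ?_, ?_, ?_, ?_⟩
    · obtain ⟨x, hx⟩ := hT'
      match x, hx with
      | Sum.inl v, hx => exact ⟨v, hx⟩
      | Sum.inr (v, w), hx => exact ⟨v, hinr v w hx⟩
    · intro v hv w hw
      have hlt := (cpp_iff_inr (T' := T') (w := w) hv).mp (h _ (show Sum.inr (v, w) ∈ T' from hw))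
      rw [Set.union_singleton]
      exact hlt
    · intro v hv hnb
      by_contra hne
      rw [Set.not_nonempty_iff_eq_empty] at hne
      have h1 := (cpp_iff_inl (T' := T') (show Sum.inl v ∈ T' from hv)).mp (h _ hv)
      rw [hne, Set.compl_empty, nc_univ_eq_one hH'] at h1
      have h2 : nc H (insert v (dT T')ᶜ) = nc H (dT T')ᶜ + 1 := by
        apply nc_insert_eq
        · exact fun hc => hc hv
        · intro u hu hadj
          exact hu (hnb hadj)
      omega
    · ext x
      cases x with
      | inl v =>
        simp only [Set.mem_union, Set.mem_image, Set.mem_setOf_eq, dT, dTv]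
        constructor
        · intro hx; exact Or.inl ⟨v, hx, rfl⟩
        · rintro (⟨u, hu, hul⟩ | ⟨q, _, hq⟩)
          · obtain rfl : u = v := Sum.inl_injective hul
            exact hu
          · exact absurd hq (by simp)
      | inr p =>
        simp only [Set.mem_union, Set.mem_image, Set.mem_setOf_eq, dT, dTv]
        constructor
        · intro hx
          exact Or.inr ⟨p, ⟨hinr p.1 p.2 hx, hx⟩, rfl⟩
        · rintro (⟨u, _, hu⟩ | ⟨q, ⟨_, hq2⟩, hq⟩)
          · exact absurd hu (by simp)
          · obtain rfl : q = p := Sum.inr_injective hq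
            exact hq2
  · rintro ⟨T, Tv, hTne, hcpp, hpend, rfl⟩
    have hdT : dT (Sum.inl '' T ∪ Sum.inr '' {p : V₁ × V₂ | p.1 ∈ T ∧ p.2 ∈ Tv p.1}) = T := by
      ext v; simp [dT]
    have hdTv : ∀ v ∈ T, dTv (Sum.inl '' T ∪ Sum.inr '' {p : V₁ × V₂ | p.1 ∈ T ∧ p.2 ∈ Tv p.1}) v
        = Tv v := by
      intro v hv; ext w
      simp only [dTv, Set.mem_union, Set.mem_image, Set.mem_setOf_eq]
      constructor
      · rintro (⟨u, _, hu⟩ | ⟨q, ⟨hq1, hq2⟩, hq⟩)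
        · exact absurd hu (by simp)
        · obtain rfl : q = (v, w) := Sum.inr_injective hq
          exact hq2
      · intro hw
        exact Or.inr ⟨(v, w), ⟨hv, hw⟩, rfl⟩
    intro i hi
    cases i with
    | inl v =>
      have hvT : v ∈ T := by
        rw [← hdT]; exact hi
      rw [cpp_iff_inl hi, hdT, hdTv v hvT]
      rcases Set.eq_empty_or_nonempty (Tv v) with he | ⟨w, hw⟩
      · obtain ⟨u, hadj, hu⟩ : ∃ u, H.Adj v u ∧ u ∉ T := by
          by_contra hc
          push_neg at hc
          exact absurd (hpend v hvT (fun u hu => hc u hu)) (by rw [he]; simp)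
        have hle := nc_insert_le_of_adj (G := H) (show u ∈ Tᶜ from hu) hadj
        rw [he, Set.compl_empty, nc_univ_eq_one hH']
        omega
      · have hlt := hcpp v hvT w hw
        rw [Set.union_singleton] at hlt
        have h1 : 1 ≤ nc H' (insert w (Tv v)ᶜ) :=
          one_le_nc ⟨w, Set.mem_insert _ _⟩
        have h2 := nc_insert_le (G := H) v Tᶜ
        omega
    | inr p =>
      obtain ⟨v, w⟩ := p
      have hp : v ∈ T ∧ w ∈ Tv v := by
        rcases hi with ⟨u, _, hu⟩ | ⟨q, hq1, hq⟩
        · exact absurd hu (by simp)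
        · obtain rfl : q = (v, w) := Sum.inr_injective hq
          exact hq1
      have hv : v ∈ dT (Sum.inl '' T ∪ Sum.inr '' {p : V₁ × V₂ | p.1 ∈ T ∧ p.2 ∈ Tv p.1}) := by
        rw [hdT]; exact hp.1
      rw [cpp_iff_inr hv, hdTv v hp.1]
      have hlt := hcpp v hp.1 w hp.2
      rw [Set.union_singleton] at hlt
      exact hlt
end
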